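/- Let ε > 0 and let γ⁽ᵗ⁾ ∈ ℝ^{p×d}. Define the surrogate function g_ε(γ | γ⁽ᵗ⁾) = (1/n²)·Σ_{k,l=1}^n [B_kl·1{B_kl<0} / (2·(a_kl(γ⁽ᵗ⁾) + ε))]·a_kl(γ)² + (1/n²)·Σ_{k,l=1}^n B_kl·1{B_kl>0}·tr(γᵀ(Z_k − Z_l)(Z_k − Z_l)ᵀγ⁽ᵗ⁾)/(a_kl(γ⁽ᵗ⁾) + ε) + c⁽ᵗ⁾, where the constant c⁽ᵗ⁾ is chosen so that g_ε(γ⁽ᵗ⁾ | γ⁽ᵗ⁾) = V²_{n,ε}(γ⁽ᵗ⁾). Then g_ε(γ | γ⁽ᵗ⁾) ≤ V²_{n,ε}(γ) for every γ ∈ ℝ^{p×d}, with equality at γ = γ⁽ᵗ⁾. -/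

import Mathlib

open Matrix

/-- Euclidean norm of a vector in `ℝ^m`. -/
noncomputable def enorm {m : ℕ} (v : Fin m → ℝ) : ℝ := Real.sqrt (∑ i, v i ^ 2)

/-- `a_kl(γ) = ‖γᵀ(Z_k − Z_l)‖₂`. -/
noncomputable def akl (n p d : ℕ) (Z : Fin n → Fin p → ℝ)
    (γ : Matrix (Fin p) (Fin d) ℝ) (k l : Fin n) : ℝ :=
  enorm (γᵀ *ᵥ (Z k - Z l))

/-- The perturbed objective `V²_{n,ε}`. -/
noncomputable def Vne (n p d : ℕ) (Z : Fin n → Fin p → ℝ) (B : Fin n → Fin n → ℝ)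
    (ε : ℝ) (γ : Matrix (Fin p) (Fin d) ℝ) : ℝ :=
  (1 / (n : ℝ) ^ 2) * ∑ k, ∑ l,
    (akl n p d Z γ k l - ε * Real.log (1 + akl n p d Z γ k l / ε)) * B k l

/-- The non-constant part of the surrogate function `g_ε(· | γ⁽ᵗ⁾)`. -/
noncomputable def gbody (n p d : ℕ) (Z : Fin n → Fin p → ℝ) (B : Fin n → Fin n → ℝ)
    (ε : ℝ) (γt γ : Matrix (Fin p) (Fin d) ℝ) : ℝ :=
  (1 / (n : ℝ) ^ 2) * ∑ k, ∑ l,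
    ((if B k l < 0 then B k l else 0) / (2 * (akl n p d Z γt k l + ε))) *
      akl n p d Z γ k l ^ 2
  + (1 / (n : ℝ) ^ 2) * ∑ k, ∑ l,
      (if 0 < B k l then B k l else 0) *
        Matrix.trace (γᵀ * Matrix.vecMulVec (Z k - Z l) (Z k - Z l) * γt) /
          (akl n p d Z γt k l + ε)

lemma enorm_nonneg {m : ℕ} (v : Fin m → ℝ) : 0 ≤ _root_.enorm v := Real.sqrt_nonneg _

lemma enorm_sq {m : ℕ} (v : Fin m → ℝ) : _root_.enorm v ^ 2 = ∑ i, v i ^ 2 :=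
  Real.sq_sqrt (Finset.sum_nonneg fun i _ => sq_nonneg _)

lemma cs_sum {m : ℕ} (x y : Fin m → ℝ) : ∑ i, x i * y i ≤ _root_.enorm x * _root_.enorm y := by
  have h := Finset.sum_mul_sq_le_sq_mul_sq Finset.univ x y
  have hx := enorm_nonneg x
  have hy := enorm_nonneg y
  have hx2 := enorm_sq x
  have hy2 := enorm_sq y
  nlinarith [h, mul_nonneg hx hy]

lemma trace_eq {p d : ℕ} (γ γt : Matrix (Fin p) (Fin d) ℝ) (z : Fin p → ℝ) :
    Matrix.trace (γᵀ * Matrix.vecMulVec z z * γt) = ∑ j, (γᵀ *ᵥ z) j * (γtᵀ *ᵥ z) j := by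
  simp only [Matrix.trace, Matrix.diag_apply, Matrix.mul_apply, Matrix.vecMulVec_apply,
    Matrix.mulVec, dotProduct, Matrix.transpose_apply, Finset.sum_mul, Finset.mul_sum]
  refine Finset.sum_congr rfl fun j _ => ?_
  refine Finset.sum_congr rfl fun i _ => Finset.sum_congr rfl fun i' _ => by ring

lemma tangent (e a b : Real) (he : 0 < e) (ha : 0 <= a) (hb : 0 <= b) :
    b / (b + e) * (a - b) <=
      (a - e * Real.log (1 + a / e)) - (b - e * Real.log (1 + b / e)) := by
  have hbe : 0 < b + e := by linarith
  have hae : 0 < a + e := by linarith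
  have h1 : (1 : Real) + a / e = (a + e) / e := by field_simp; ring
  have h2 : (1 : Real) + b / e = (b + e) / e := by field_simp; ring
  have hlog : Real.log (1 + a / e) - Real.log (1 + b / e) = Real.log ((a + e) / (b + e)) := by
    rw [h1, h2, Real.log_div hae.ne' he.ne', Real.log_div hbe.ne' he.ne',
      Real.log_div hae.ne' hbe.ne']
    ring
  have hle : Real.log ((a + e) / (b + e)) <= (a - b) / (b + e) := by
    have h := Real.log_le_sub_one_of_pos (show (0:Real) < (a + e) / (b + e) by positivity)
    have heq : (a + e) / (b + e) - 1 = (a - b) / (b + e) := by field_simp; ring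
    linarith [heq ▸ h]
  have key : e * (Real.log (1 + a / e) - Real.log (1 + b / e)) <= e * ((a - b) / (b + e)) := by
    rw [hlog]; exact mul_le_mul_of_nonneg_left hle he.le
  have hid : b / (b + e) * (a - b) = (a - b) - e * ((a - b) / (b + e)) := by
    field_simp; ring
  linarith [key, hid]

noncomputable def Gfun (e v : Real) : Real -> Real := fun x =>
  (x ^ 2 - v ^ 2) / (2 * v) - e * (x - v) / v - (x - v) + e * (Real.log x - Real.log v)

lemma Gderiv (e v x : Real) (hx : 0 < x) :
    HasDerivAt (Gfun e v) (2 * x / (2 * v) - e * 1 / v - 1 + e * x⁻¹) x := by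
  have hp : HasDerivAt (fun x : Real => x ^ 2) (2 * x) x := by
    simpa using hasDerivAt_pow 2 x
  have h1 := (hp.sub_const (v ^ 2)).div_const (2 * v)
  have h3 : HasDerivAt (fun x : Real => x - v) 1 x := (hasDerivAt_id x).sub_const v
  have h2 := (h3.const_mul e).div_const v
  have h4 := ((Real.hasDerivAt_log hx.ne').sub_const (Real.log v)).const_mul e
  exact ((h1.sub h2).sub h3).add h4

lemma Gval (e v x : Real) (he : 0 < e) (hv : e <= v) (hx : e <= x) : 0 <= Gfun e v x := by
  have hv0 : 0 < v := lt_of_lt_of_le he hv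
  have hGv : Gfun e v v = 0 := by simp [Gfun]
  have hd : forall y : Real, e <= y ->
      deriv (Gfun e v) y = (y - v) * (y - e) / (y * v) := by
    intro y hy
    have hy0 : 0 < y := lt_of_lt_of_le he hy
    rw [(Gderiv e v y hy0).deriv]
    field_simp
    ring
  rcases le_total v x with hvx | hxv
  · have hmono : MonotoneOn (Gfun e v) (Set.Icc v x) := by
      apply monotoneOn_of_deriv_nonneg (convex_Icc v x)
      · intro y hy
        exact ((Gderiv e v y (lt_of_lt_of_le hv0 hy.1)).differentiableAt.continuousAt).continuousWithinAt
      · intro y hy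
        rw [interior_Icc] at hy
        exact ((Gderiv e v y (lt_trans hv0 hy.1)).differentiableAt).differentiableWithinAt
      · intro y hy
        rw [interior_Icc] at hy
        rw [hd y (le_trans hv hy.1.le)]
        have h1 : 0 <= y - v := by linarith [hy.1]
        have h2 : 0 <= y - e := by linarith [hy.1]
        have h4 : 0 < y * v := mul_pos (lt_trans hv0 hy.1) hv0
        exact div_nonneg (mul_nonneg h1 h2) h4.le
    have h := hmono (Set.left_mem_Icc.2 hvx) (Set.right_mem_Icc.2 hvx) hvx
    rw [hGv] at h; exact h
  · have hx0 : 0 < x := lt_of_lt_of_le he hx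
    have hanti : AntitoneOn (Gfun e v) (Set.Icc x v) := by
      apply antitoneOn_of_deriv_nonpos (convex_Icc x v)
      · intro y hy
        exact ((Gderiv e v y (lt_of_lt_of_le hx0 hy.1)).differentiableAt.continuousAt).continuousWithinAt
      · intro y hy
        rw [interior_Icc] at hy
        exact ((Gderiv e v y (lt_trans hx0 hy.1)).differentiableAt).differentiableWithinAt
      · intro y hy
        rw [interior_Icc] at hy
        rw [hd y (le_trans hx hy.1.le)]
        have h1 : y - v <= 0 := by linarith [hy.2]
        have h2 : 0 <= y - e := by linarith [hy.1]
        have h3 : (y - v) * (y - e) <= 0 := mul_nonpos_of_nonpos_of_nonneg h1 h2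
        have h4 : 0 < y * v := mul_pos (lt_trans hx0 hy.1) hv0
        exact div_nonpos_of_nonpos_of_nonneg h3 h4.le
    have h := hanti (Set.left_mem_Icc.2 hxv) (Set.right_mem_Icc.2 hxv) hxv
    rw [hGv] at h; exact h

lemma quad (e a b : Real) (he : 0 < e) (ha : 0 <= a) (hb : 0 <= b) :
    (a - e * Real.log (1 + a / e)) - (b - e * Real.log (1 + b / e)) <=
      (a ^ 2 - b ^ 2) / (2 * (b + e)) := by
  have hae : 0 < a + e := by linarith
  have hbe : 0 < b + e := by linarith
  have hla : Real.log (1 + a / e) = Real.log (a + e) - Real.log e := by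
    rw [show (1:Real) + a / e = (a + e) / e by field_simp; ring, Real.log_div hae.ne' he.ne']
  have hlb : Real.log (1 + b / e) = Real.log (b + e) - Real.log e := by
    rw [show (1:Real) + b / e = (b + e) / e by field_simp; ring, Real.log_div hbe.ne' he.ne']
  have hG := Gval e (b + e) (a + e) he (by linarith) (by linarith)
  have heq : (a ^ 2 - b ^ 2) / (2 * (b + e)) -
      ((a - e * Real.log (1 + a / e)) - (b - e * Real.log (1 + b / e))) = Gfun e (b + e) (a + e) := by
    rw [hla, hlb]
    simp only [Gfun]
    field_simp
    ring
  linarith [heq ▸ hG]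

lemma sum2_add (n : ℕ) (f g : Fin n → Fin n → ℝ) :
    ∑ k, ∑ l, (f k l + g k l) = (∑ k, ∑ l, f k l) + (∑ k, ∑ l, g k l) := by
  rw [← Finset.sum_add_distrib]
  exact Finset.sum_congr rfl fun k _ => Finset.sum_add_distrib

lemma sum2_sub (n : ℕ) (f g : Fin n → Fin n → ℝ) :
    ∑ k, ∑ l, (f k l - g k l) = (∑ k, ∑ l, f k l) - (∑ k, ∑ l, g k l) := by
  rw [← Finset.sum_sub_distrib]
  exact Finset.sum_congr rfl fun k _ => Finset.sum_sub_distrib _ _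

/-- with c⁽ᵗ⁾ chosen so that `g_ε(γ⁽ᵗ⁾|γ⁽ᵗ⁾) = V²_{n,ε}(γ⁽ᵗ⁾)`,
the surrogate satisfies `g_ε(γ|γ⁽ᵗ⁾) ≤ V²_{n,ε}(γ)` for every γ, with equality
at `γ = γ⁽ᵗ⁾`. -/
theorem stmt_11 (n p d : ℕ) (Z : Fin n → Fin p → ℝ) (B : Fin n → Fin n → ℝ)
    (ε : ℝ) (hε : 0 < ε) (γt : Matrix (Fin p) (Fin d) ℝ)
    (ct : ℝ) (hct : gbody n p d Z B ε γt γt + ct = Vne n p d Z B ε γt) :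
    (∀ γ : Matrix (Fin p) (Fin d) ℝ,
        gbody n p d Z B ε γt γ + ct ≤ Vne n p d Z B ε γ) ∧
    gbody n p d Z B ε γt γt + ct = Vne n p d Z B ε γt := by
  refine ⟨fun γ => ?_, hct⟩
  have key : ∀ k l : Fin n,
      (if B k l < 0 then B k l else 0) / (2 * (akl n p d Z γt k l + ε)) * akl n p d Z γ k l ^ 2
        + (if 0 < B k l then B k l else 0) *
            Matrix.trace (γᵀ * Matrix.vecMulVec (Z k - Z l) (Z k - Z l) * γt) /
              (akl n p d Z γt k l + ε)
      ≤ ((if B k l < 0 then B k l else 0) / (2 * (akl n p d Z γt k l + ε)) *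
            akl n p d Z γt k l ^ 2
        + (if 0 < B k l then B k l else 0) *
            Matrix.trace (γtᵀ * Matrix.vecMulVec (Z k - Z l) (Z k - Z l) * γt) /
              (akl n p d Z γt k l + ε))
        + ((akl n p d Z γ k l - ε * Real.log (1 + akl n p d Z γ k l / ε)) * B k l
           - (akl n p d Z γt k l - ε * Real.log (1 + akl n p d Z γt k l / ε)) * B k l) := by
    intro k l
    set a := akl n p d Z γ k l with ha_def
    set t := akl n p d Z γt k l with ht_def
    have ha : 0 ≤ a := Real.sqrt_nonneg _
    have ht : 0 ≤ t := Real.sqrt_nonneg _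
    have hv : 0 < t + ε := by linarith
    have hTt : Matrix.trace (γtᵀ * Matrix.vecMulVec (Z k - Z l) (Z k - Z l) * γt) = t ^ 2 := by
      rw [trace_eq]
      rw [ht_def, show (akl n p d Z γt k l) ^ 2 = ∑ j, ((γtᵀ) *ᵥ (Z k - Z l)) j ^ 2 from
        enorm_sq _]
      exact Finset.sum_congr rfl fun j _ => (pow_two _).symm
    have hT : Matrix.trace (γᵀ * Matrix.vecMulVec (Z k - Z l) (Z k - Z l) * γt) ≤ a * t := by
      rw [trace_eq]
      exact cs_sum _ _
    rcases lt_trichotomy (B k l) 0 with hb | hb | hb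
    · have hq := quad ε a t hε ha ht
      have h5 := mul_le_mul_of_nonpos_left hq (le_of_lt hb)
      simp only [if_pos hb, if_neg (by linarith : ¬ (0:ℝ) < B k l), zero_mul, zero_div,
        add_zero]
      calc B k l / (2 * (t + ε)) * a ^ 2
          = B k l / (2 * (t + ε)) * t ^ 2 + B k l * ((a ^ 2 - t ^ 2) / (2 * (t + ε))) := by
            field_simp; ring
        _ ≤ B k l / (2 * (t + ε)) * t ^ 2
            + B k l * ((a - ε * Real.log (1 + a / ε)) - (t - ε * Real.log (1 + t / ε))) := by
            linarith [h5]
        _ = B k l / (2 * (t + ε)) * t ^ 2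
            + ((a - ε * Real.log (1 + a / ε)) * B k l
               - (t - ε * Real.log (1 + t / ε)) * B k l) := by ring
    · simp [hb]
    · have h2 := tangent ε a t hε ha ht
      have h5 := mul_le_mul_of_nonneg_left h2 (le_of_lt hb)
      simp only [if_neg (by linarith : ¬ B k l < 0), if_pos hb, zero_div, zero_mul,
        zero_add]
      rw [hTt]
      have h3 : B k l * Matrix.trace (γᵀ * Matrix.vecMulVec (Z k - Z l) (Z k - Z l) * γt)
          / (t + ε) ≤ B k l * (a * t) / (t + ε) := by
        have := mul_le_mul_of_nonneg_left hT (le_of_lt hb)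
        exact div_le_div_of_nonneg_right this hv.le
      calc B k l * Matrix.trace (γᵀ * Matrix.vecMulVec (Z k - Z l) (Z k - Z l) * γt) / (t + ε)
          ≤ B k l * (a * t) / (t + ε) := h3
        _ = B k l * t ^ 2 / (t + ε) + B k l * (t / (t + ε) * (a - t)) := by
            field_simp; ring
        _ ≤ B k l * t ^ 2 / (t + ε)
            + B k l * ((a - ε * Real.log (1 + a / ε)) - (t - ε * Real.log (1 + t / ε))) := by
            linarith [h5]
        _ = B k l * t ^ 2 / (t + ε)
            + ((a - ε * Real.log (1 + a / ε)) * B k l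
               - (t - ε * Real.log (1 + t / ε)) * B k l) := by ring
  have S := Finset.sum_le_sum (fun k (_ : k ∈ Finset.univ) =>
    Finset.sum_le_sum (fun l (_ : l ∈ Finset.univ) => key k l))
  rw [sum2_add, sum2_add, sum2_add, sum2_sub] at S
  have hn : (0:ℝ) ≤ 1 / (n : ℝ) ^ 2 := by positivity
  have M := mul_le_mul_of_nonneg_left S hn
  rw [mul_add, mul_add, mul_add, mul_sub] at M
  unfold gbody Vne at hct ⊢
  linarith [M, hct]
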